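/- Let F : ∅ = K₀ ↔ K₁ ↔ ⋯ ↔ K_i be a simplex-wise zigzag filtration (each arrow adds or deletes one simplex), and let [b,i] and [b',i] be intervals in the degree-p homology barcode of F with b ≺ b' in the birth order. If rep = {z_α | α ∈ [b,i]} and rep' = {z'_α | α ∈ [b',i]} are p-th homology representatives for [b,i] and [b',i] respectively, then the sequence rep ⊞ rep' defined by z̄_α = z_α + z'_α for α ≥ max(b,b') and z̄_α = z'_α for b' ≤ α < b (when b' < b), is again a p-th homology representative for [b',i]. -/
import Mathlib


/-- A simplex is a finite set of (natural-number) vertices. -/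
abbrev Simplex : Type := Finset ℕ

/-- A chain over ℤ/2 (all degrees together) is a finitely supported
function from simplices to ℤ/2. -/
abbrev Chain : Type := Simplex →₀ ZMod 2

/-- A (finite) simplicial complex: a finite set of simplices closed under faces. -/
def IsComplex (K : Finset Simplex) : Prop := ∀ s ∈ K, ∀ t ⊆ s, t ∈ K

/-- Boundary of a single simplex over ℤ/2. -/
noncomputable def bdrySimplex (s : Simplex) : Chain :=
  ∑ x ∈ s, Finsupp.single (s.erase x) 1

/-- The boundary operator on chains (all degrees), over ℤ/2. -/
noncomputable def bdry : Chain →ₗ[ZMod 2] Chain :=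
  Finsupp.lsum (ZMod 2) fun s => LinearMap.toSpanSingleton (ZMod 2) Chain (bdrySimplex s)

/-- The chain group of a complex `K`: chains supported on `K`. -/
noncomputable def chainsOf (K : Finset Simplex) : Submodule (ZMod 2) Chain :=
  Finsupp.supported (ZMod 2) (ZMod 2) (↑K : Set Simplex)

/-- The cycle group `Z(K)` (all degrees). -/
noncomputable def cyclesOf (K : Finset Simplex) : Submodule (ZMod 2) Chain :=
  chainsOf K ⊓ LinearMap.ker bdry

/-- The boundary group `B(K)` (all degrees). -/
noncomputable def bdriesOf (K : Finset Simplex) : Submodule (ZMod 2) Chain :=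
  Submodule.map bdry (chainsOf K)

theorem chainsOf_mono {K K' : Finset Simplex} (h : K ⊆ K') : chainsOf K ≤ chainsOf K' :=
  Finsupp.supported_mono (by exact_mod_cast h)

theorem cyclesOf_mono {K K' : Finset Simplex} (h : K ⊆ K') : cyclesOf K ≤ cyclesOf K' :=
  inf_le_inf_right _ (chainsOf_mono h)

theorem bdriesOf_mono {K K' : Finset Simplex} (h : K ⊆ K') : bdriesOf K ≤ bdriesOf K' :=
  Submodule.map_mono (chainsOf_mono h)

/-- `B(K)` viewed inside `Z(K)`. -/
noncomputable def homologyRel (K : Finset Simplex) : Submodule (ZMod 2) (cyclesOf K) :=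
  (bdriesOf K).comap (cyclesOf K).subtype

/-- The homology `H(K) = Z(K)/B(K)` over ℤ/2, all degrees summed. -/
noncomputable abbrev homology (K : Finset Simplex) :=
  cyclesOf K ⧸ homologyRel K

/-- The inclusion-induced map on homology. -/
noncomputable def inducedH {K K' : Finset Simplex} (h : K ⊆ K') :
    homology K →ₗ[ZMod 2] homology K' :=
  Submodule.mapQ _ _ (Submodule.inclusion (cyclesOf_mono h)) (by
    intro x hx
    simp only [homologyRel, Submodule.mem_comap, Submodule.coe_subtype,
      Submodule.coe_inclusion] at hx ⊢
    exact bdriesOf_mono h hx)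

open Classical in
/-- The homology class of a chain (zero if the chain is not a cycle of `K`). -/
noncomputable def hclass (K : Finset Simplex) (c : Chain) : homology K :=
  if h : c ∈ cyclesOf K then Submodule.Quotient.mk ⟨c, h⟩ else 0

/-- A simplex-wise zigzag filtration of length `m` starting at the empty complex:
each arrow inserts or deletes exactly one simplex. -/
structure ZZ (m : ℕ) where
  K : ℕ → Finset Simplex
  cpx : ∀ j, IsComplex (K j)
  empty0 : K 0 = ∅
  step : ∀ j < m, (∃ σ, σ ∉ K j ∧ K (j+1) = insert σ (K j)) ∨
                  (∃ σ, σ ∉ K (j+1) ∧ K j = insert σ (K (j+1)))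

/-- Homology representative for the interval `[b,d]` of the zigzag module of `F_i`
(Definition of homology representatives). -/
def IsHRep {m : ℕ} (F : ZZ m) (i b d : ℕ) (z : ℕ → Chain) : Prop :=
  1 ≤ b ∧ b ≤ d ∧ d ≤ i ∧ i ≤ m ∧
  (∀ α, b ≤ α → α ≤ d → z α ∈ cyclesOf (F.K α)) ∧
  (∀ α, b ≤ α → α < d →
    (F.K α ⊆ F.K (α+1) → z α + z (α+1) ∈ bdriesOf (F.K (α+1))) ∧
    (F.K (α+1) ⊆ F.K α → z α + z (α+1) ∈ bdriesOf (F.K α))) ∧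
  ((F.K (b-1) ⊆ F.K b → z b ∉ cyclesOf (F.K (b-1))) ∧
   (F.K b ⊆ F.K (b-1) → z b ∈ bdriesOf (F.K (b-1)) ∧ z b ∉ bdriesOf (F.K b))) ∧
  (d < i →
    (F.K (d+1) ⊆ F.K d → z d ∉ cyclesOf (F.K (d+1))) ∧
    (F.K d ⊆ F.K (d+1) → z d ∈ bdriesOf (F.K (d+1)) ∧ z d ∉ bdriesOf (F.K d)))

/-- Boundary representative for the interval `[b,d]` of the boundary zigzag module of `F_i`. -/
def IsBRep {m : ℕ} (F : ZZ m) (i b d : ℕ) (z : ℕ → Chain) : Prop :=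
  1 ≤ b ∧ b ≤ d ∧ d ≤ i ∧ i ≤ m ∧
  (∀ α, b ≤ α → α ≤ d → z α ∈ bdriesOf (F.K α)) ∧
  (∀ α, b ≤ α → α < d → z (α+1) = z α) ∧
  (F.K (b-1) ⊆ F.K b ∧ z b ∉ bdriesOf (F.K (b-1))) ∧
  (d < i → F.K (d+1) ⊆ F.K d ∧ z d ∉ bdriesOf (F.K (d+1)))

/-- `j ∈ P^H(F_i)`: homology birth index. -/
def HBirthAt {m : ℕ} (F : ZZ m) (i j : ℕ) : Prop :=
  1 ≤ j ∧ j ≤ i ∧ i ≤ m ∧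
  ((∃ h : F.K (j-1) ⊆ F.K j, Function.Injective (inducedH h)) ∨
   (∃ h : F.K j ⊆ F.K (j-1), Function.Surjective (inducedH h)))

/-- `j ∈ P^B(F_i)`: boundary birth index. -/
def BBirthAt {m : ℕ} (F : ZZ m) (i j : ℕ) : Prop :=
  1 ≤ j ∧ j ≤ i ∧ i ≤ m ∧ F.K (j-1) ⊆ F.K j ∧ bdriesOf (F.K (j-1)) ≠ bdriesOf (F.K j)

/-- `j ∈ N^H(F_i)` for `j < i` (the arrow at `j` kills a homology class). -/
def HDeathAt {m : ℕ} (F : ZZ m) (i j : ℕ) : Prop :=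
  j < i ∧ i ≤ m ∧
  ((∃ h : F.K j ⊆ F.K (j+1), ¬ Function.Injective (inducedH h)) ∨
   (∃ h : F.K (j+1) ⊆ F.K j, ¬ Function.Surjective (inducedH h)))

/-- `j ∈ N^B(F_i)` for `j < i` (the arrow at `j` kills a boundary class). -/
def BDeathAt {m : ℕ} (F : ZZ m) (i j : ℕ) : Prop :=
  j < i ∧ i ≤ m ∧
  ∃ _ : F.K (j+1) ⊆ F.K j, bdriesOf (F.K (j+1)) ≠ bdriesOf (F.K j)

/-- The total order `≺` on birth indices (Definition of the total order). -/
def Prec {m : ℕ} (F : ZZ m) (i b b' : ℕ) : Prop :=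
  (BBirthAt F i b ∧ HBirthAt F i b') ∨
  (BBirthAt F i b ∧ BBirthAt F i b' ∧ b < b') ∨
  (HBirthAt F i b ∧ HBirthAt F i b' ∧ b < b' ∧ F.K (b'-1) ⊆ F.K b') ∨
  (HBirthAt F i b ∧ HBirthAt F i b' ∧ b' < b ∧ F.K b ⊆ F.K (b-1))

/-- A wire at index `i` (Definition of wires). -/
def IsWire {m : ℕ} (F : ZZ m) (i : ℕ) (c : Chain) : Prop :=
  1 ≤ i ∧ i ≤ m ∧ c ∈ cyclesOf (F.K i) ∧
  ((F.K (i-1) ⊆ F.K i ∧ c ∉ cyclesOf (F.K (i-1))) ∨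
   (F.K i ⊆ F.K (i-1) ∧ c ∈ bdriesOf (F.K (i-1)) ∧ c ∉ bdriesOf (F.K i)) ∨
   (F.K (i-1) ⊆ F.K i ∧ c ∈ bdriesOf (F.K i) ∧ c ∉ bdriesOf (F.K (i-1))))

/-- Partial sum of the wires in the bundle `W` whose starting index is `≤ α`. -/
noncomputable def psum (w : ℕ → Chain) (W : Finset ℕ) (α : ℕ) : Chain :=
  ∑ j ∈ W.filter (· ≤ α), w j

/-- A boundary bundle `W` (with wires `w`) alive till index `b`. -/
def AliveTill {m : ℕ} (F : ZZ m) (w : ℕ → Chain) (W : Finset ℕ) (b : ℕ) : Prop :=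
  ∀ α ≤ b, psum w W α ∈ bdriesOf (F.K α)

/-- `S` (with representatives `z`) is the homology barcode `Pers^H(F_i)`:
each interval carries a representative and, at every index `j`, the classes of the
representative cycles of the intervals containing `j` form a basis of `H(K_j)`. -/
def IsHBarcode {m : ℕ} (F : ZZ m) (i : ℕ) (S : Finset (ℕ × ℕ))
    (z : ℕ × ℕ → ℕ → Chain) : Prop :=
  (∀ q ∈ S, IsHRep F i q.1 q.2 (z q)) ∧
  ∀ j ≤ i,
    LinearIndependent (ZMod 2)
      (fun q : {q : ℕ × ℕ // q ∈ S ∧ q.1 ≤ j ∧ j ≤ q.2} => hclass (F.K j) (z q.val j)) ∧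
    Submodule.span (ZMod 2)
      (Set.range (fun q : {q : ℕ × ℕ // q ∈ S ∧ q.1 ≤ j ∧ j ≤ q.2} =>
        hclass (F.K j) (z q.val j))) = ⊤

/-- `S` (with representatives `z`) is the boundary barcode `Pers^B(F_i)`. -/
def IsBBarcode {m : ℕ} (F : ZZ m) (i : ℕ) (S : Finset (ℕ × ℕ))
    (z : ℕ × ℕ → ℕ → Chain) : Prop :=
  (∀ q ∈ S, IsBRep F i q.1 q.2 (z q)) ∧
  ∀ j ≤ i,
    LinearIndependent (ZMod 2)
      (fun q : {q : ℕ × ℕ // q ∈ S ∧ q.1 ≤ j ∧ j ≤ q.2} => z q.val j) ∧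
    Submodule.span (ZMod 2)
      (Set.range (fun q : {q : ℕ × ℕ // q ∈ S ∧ q.1 ≤ j ∧ j ≤ q.2} =>
        z q.val j)) = bdriesOf (F.K j)


/-- A chain of pure degree `p` (every simplex has `p+1` vertices). -/
def IsDeg (p : ℕ) (c : Chain) : Prop := ∀ s ∈ c.support, s.card = p + 1


lemma chain_self_add (x : Chain) : x + x = 0 := by
  rw [← two_smul (ZMod 2) x]
  have h2 : (2:ZMod 2) = 0 := by decide
  rw [h2, zero_smul]

lemma noCoface {K : Finset Simplex} (hK : IsComplex K) {σ : Simplex} (hσ : σ ∉ K)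
    {c : Chain} (hc : c ∈ chainsOf (insert σ K)) : bdry c σ = 0 := by
  classical
  have hsupp : ↑c.support ⊆ (↑(insert σ K) : Set Simplex) := hc
  have hb : bdry c = c.sum fun s a => a • bdrySimplex s := by
    rw [bdry, Finsupp.lsum_apply]; rfl
  rw [hb, Finsupp.sum_apply, Finsupp.sum]
  apply Finset.sum_eq_zero
  intro s hs
  have hsK : s ∈ insert σ K := by exact_mod_cast hsupp hs
  rw [Finsupp.smul_apply]
  have : bdrySimplex s σ = 0 := by
    rw [bdrySimplex, Finsupp.finset_sum_apply]
    apply Finset.sum_eq_zero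
    intro x hx
    rw [Finsupp.single_apply]
    have hne : s.erase x ≠ σ := by
      intro h
      rcases Finset.mem_insert.mp hsK with h' | h'
      · exact Finset.erase_eq_self.mp (h.trans h'.symm) hx
      · exact hσ (hK s h' σ (h ▸ Finset.erase_subset x s))
    simp [hne]
  rw [this, smul_zero]

lemma stepNe {m : ℕ} (F : ZZ m) {j : ℕ} (hj : j < m)
    (h1 : F.K j ⊆ F.K (j+1)) (h2 : F.K (j+1) ⊆ F.K j) : False := by
  rcases F.step j hj with ⟨σ, hσ, he⟩ | ⟨σ, hσ, he⟩
  · exact hσ (h2 (by rw [he]; exact Finset.mem_insert_self σ _))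
  · exact hσ (h1 (by rw [he]; exact Finset.mem_insert_self σ _))

/-- the sum `rep ⊞ rep'` of two p-th homology representatives for
intervals `[b,i]`, `[b',i]` with `b ≺ b'` is a p-th homology representative for `[b',i]`. -/
theorem stmt5 (m i b b' p : ℕ) (F : ZZ m)
    (z z' : ℕ → Chain)
    (hprec : (b < b' ∧ F.K (b'-1) ⊆ F.K b') ∨ (b' < b ∧ F.K b ⊆ F.K (b-1)))
    (h1 : IsHRep F i b i z) (h2 : IsHRep F i b' i z')
    (hd1 : ∀ α, b ≤ α → α ≤ i → IsDeg p (z α))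
    (hd2 : ∀ α, b' ≤ α → α ≤ i → IsDeg p (z' α)) :
    IsHRep F i b' i (fun α => if b ≤ α then z α + z' α else z' α) ∧
    (∀ α, b' ≤ α → α ≤ i →
      IsDeg p (if b ≤ α then z α + z' α else z' α)) := by
  obtain ⟨hb1, hbi, -, him, hcyc, hcons, hbirth, -⟩ := h1
  obtain ⟨hb'1, hb'i, -, -, hcyc', hcons', hbirth', -⟩ := h2
  refine ⟨⟨hb'1, hb'i, le_rfl, him, ?_, ?_, ?_, ?_⟩, ?_⟩
  · -- cycles
    intro α hα hαi
    by_cases hb : b ≤ α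
    · simp only [if_pos hb]
      exact add_mem (hcyc α hb hαi) (hcyc' α hα hαi)
    · simp only [if_neg hb]
      exact hcyc' α hα hαi
  · -- consecutive
    intro α hα hαi
    by_cases hb : b ≤ α
    · have hbs : b ≤ α + 1 := le_trans hb (Nat.le_succ α)
      simp only [if_pos hb, if_pos hbs]
      constructor
      · intro hf
        have A := (hcons α hb hαi).1 hf
        have B := (hcons' α hα hαi).1 hf
        have e : z α + z' α + (z (α+1) + z' (α+1))
            = (z α + z (α+1)) + (z' α + z' (α+1)) := by abel
        rw [e]; exact add_mem A B
      · intro hf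
        have A := (hcons α hb hαi).2 hf
        have B := (hcons' α hα hαi).2 hf
        have e : z α + z' α + (z (α+1) + z' (α+1))
            = (z α + z (α+1)) + (z' α + z' (α+1)) := by abel
        rw [e]; exact add_mem A B
    · by_cases hbs : b ≤ α + 1
      · have hab : α + 1 = b := by omega
        rcases hprec with ⟨hlt, -⟩ | ⟨hlt, hKb⟩
        · omega
        have hback : F.K (α+1) ⊆ F.K α := by
          have h := hKb; rw [← hab] at h; simpa using h
        simp only [if_neg hb, if_pos hbs]
        constructor
        · intro hf
          exact (stepNe F (show α < m by omega) hf hback).elim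
        · intro hf
          have B := (hcons' α hα hαi).2 hf
          have hzb : z (α+1) ∈ bdriesOf (F.K α) := by
            have h := (hbirth.2 hKb).1
            rw [← hab] at h; simpa using h
          have e : z' α + (z (α+1) + z' (α+1))
              = (z' α + z' (α+1)) + z (α+1) := by abel
          rw [e]; exact add_mem B hzb
      · simp only [if_neg hb, if_neg hbs]
        exact hcons' α hα hαi
  · -- birth
    rcases hprec with ⟨hlt, hKf⟩ | ⟨hlt, hKb⟩
    · have hbb' : b ≤ b' := le_of_lt hlt
      have e : b' - 1 + 1 = b' := by omega
      simp only [if_pos hbb']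
      constructor
      · intro hf hmem
        obtain ⟨σ, hσ, he⟩ : ∃ σ, σ ∉ F.K (b'-1) ∧ F.K b' = insert σ (F.K (b'-1)) := by
          rcases F.step (b'-1) (show b'-1 < m by omega) with ⟨σ, hσ, hee⟩ | ⟨σ, hσ, hee⟩
          · rw [e] at hee; exact ⟨σ, hσ, hee⟩
          · rw [e] at hσ hee
            exact absurd (hf (by rw [hee]; exact Finset.mem_insert_self σ _)) hσ
        have hcz : z (b'-1) + z b' ∈ bdriesOf (F.K b') := by
          have h := (hcons (b'-1) (by omega) (by omega)).1 (by rw [e]; exact hKf)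
          rw [e] at h; exact h
        obtain ⟨c, hcK, hcb⟩ := hcz
        have hz1 := hcyc (b'-1) (by omega) (by omega)
        rw [cyclesOf, Submodule.mem_inf] at hz1
        have hz1σ : z (b'-1) σ = 0 := by
          by_contra hne
          have hmem' : σ ∈ (z (b'-1)).support := Finsupp.mem_support_iff.mpr hne
          have : σ ∈ (↑(F.K (b'-1)) : Set Simplex) := hz1.1 hmem'
          exact hσ (by exact_mod_cast this)
        have hbcσ : bdry c σ = 0 := by
          refine noCoface (F.cpx (b'-1)) hσ ?_
          rwa [← he]
        have hzeq : z b' = z (b'-1) + bdry c := by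
          calc z b' = (z (b'-1) + z (b'-1)) + z b' := by
                rw [chain_self_add, zero_add]
            _ = z (b'-1) + (z (b'-1) + z b') := by abel
            _ = z (b'-1) + bdry c := by rw [hcb]
        have hzσ : z b' σ = 0 := by
          rw [hzeq, Finsupp.add_apply, hz1σ, hbcσ, add_zero]
        have hz := hcyc b' hbb' hb'i
        rw [cyclesOf, Submodule.mem_inf] at hz
        have hzchains : z b' ∈ cyclesOf (F.K (b'-1)) := by
          rw [cyclesOf, Submodule.mem_inf]
          refine ⟨?_, hz.2⟩
          rw [chainsOf, Finsupp.mem_supported]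
          intro t ht
          have hts : t ∈ (z b').support := by exact_mod_cast ht
          have htK : t ∈ F.K b' := by
            have := hz.1 ht; exact_mod_cast this
          rw [he] at htK
          rcases Finset.mem_insert.mp htK with h | h
          · exact absurd hzσ (by rw [← h]; exact Finsupp.mem_support_iff.mp hts)
          · exact_mod_cast h
        have hz'mem : z' b' ∈ cyclesOf (F.K (b'-1)) := by
          have hrw : z' b' = z b' + (z b' + z' b') := by
            rw [← add_assoc, chain_self_add, zero_add]
          rw [hrw]; exact add_mem hzchains hmem
        exact (hbirth'.1 hf) hz'mem
      · intro hback
        exact absurd hback (fun hback =>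
          stepNe F (show b'-1 < m by omega) (by rw [e]; exact hKf) (by rw [e]; exact hback))
    · have hnb : ¬ b ≤ b' := by omega
      simp only [if_neg hnb]
      exact hbirth'
  · -- death (vacuous)
    intro h
    exact absurd h (lt_irrefl i)
  · -- degree
    intro α hα hαi
    by_cases hb : b ≤ α
    · simp only [if_pos hb]
      intro s hs
      rcases Finset.mem_union.mp (Finsupp.support_add hs) with h | h
      · exact hd1 α hb hαi s h
      · exact hd2 α hα hαi s h
    · simp only [if_neg hb]
      exact hd2 α hα hαi
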